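/- Congruence invariance of the geometric mean: if A, B are strictly accretive, G = A#B is the unique strictly accretive solution of GA^{-1}G = B, and X is any invertible matrix, then H = XᴴGX is the unique strictly accretive solution of H(XᴴAX)^{-1}H = XᴴBX. -/

import Mathlib

open Matrix
open scoped ComplexOrder

private lemma posdef_congr {n : ℕ} {M X : Matrix (Fin n) (Fin n) ℂ}
    (hM : M.PosDef) (hX : IsUnit X) : (Xᴴ * M * X).PosDef := by
  refine Matrix.PosDef.of_dotProduct_mulVec_pos (Matrix.isHermitian_conjTranspose_mul_mul X hM.1) fun x hx => ?_
  have hx' : X *ᵥ x ≠ 0 := fun h => hx (Matrix.mulVec_injective_iff_isUnit.2 hX (by simp [h]))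
  have key : star x ⬝ᵥ (Xᴴ * M * X) *ᵥ x = star (X *ᵥ x) ⬝ᵥ M *ᵥ (X *ᵥ x) := by
    rw [star_mulVec, ← Matrix.mulVec_mulVec, ← Matrix.mulVec_mulVec,
      Matrix.dotProduct_mulVec (star x)]
  rw [key]
  exact hM.dotProduct_mulVec_pos hx'

private lemma acc_isUnit {n : ℕ} {A : Matrix (Fin n) (Fin n) ℂ}
    (hA : Matrix.PosDef ((2⁻¹ : ℂ) • (A + Aᴴ))) : IsUnit A := by
  by_contra h
  rw [Matrix.isUnit_iff_isUnit_det, isUnit_iff_ne_zero, not_not] at h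
  obtain ⟨v, hv, hAv⟩ := (Matrix.exists_mulVec_eq_zero_iff).2 h
  have h2 : star v ⬝ᵥ ((2⁻¹ : ℂ) • (A + Aᴴ)) *ᵥ v = 0 := by
    have hconj : star v ⬝ᵥ Aᴴ *ᵥ v = star (star v ⬝ᵥ A *ᵥ v) := by
      rw [Matrix.dotProduct_mulVec, ← Matrix.star_mulVec, Matrix.star_dotProduct]
    rw [Matrix.smul_mulVec, dotProduct_smul, Matrix.add_mulVec,
      dotProduct_add, hAv, hconj, hAv]
    simp
  exact absurd h2 (ne_of_gt (hA.dotProduct_mulVec_pos hv))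

/-- Congruence invariance of the geometric mean: if `A, B` are strictly accretive,
`G = A#B` is the unique strictly accretive solution of `G A⁻¹ G = B`, and `X` is
invertible, then `H = Xᴴ G X` is the unique strictly accretive solution of
`H (Xᴴ A X)⁻¹ H = Xᴴ B X`. -/
theorem geometricMean_congruence_invariance {n : ℕ} (A B G X : Matrix (Fin n) (Fin n) ℂ)
    (hA : Matrix.PosDef ((2⁻¹ : ℂ) • (A + Aᴴ)))
    (hB : Matrix.PosDef ((2⁻¹ : ℂ) • (B + Bᴴ)))
    (hG : Matrix.PosDef ((2⁻¹ : ℂ) • (G + Gᴴ)))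
    (hGsol : G * A⁻¹ * G = B)
    (hGuniq : ∀ G' : Matrix (Fin n) (Fin n) ℂ,
      Matrix.PosDef ((2⁻¹ : ℂ) • (G' + G'ᴴ)) → G' * A⁻¹ * G' = B → G' = G)
    (hX : IsUnit X) :
    Matrix.PosDef ((2⁻¹ : ℂ) • ((Xᴴ * G * X) + (Xᴴ * G * X)ᴴ)) ∧
      (Xᴴ * G * X) * (Xᴴ * A * X)⁻¹ * (Xᴴ * G * X) = Xᴴ * B * X ∧
      ∀ H : Matrix (Fin n) (Fin n) ℂ,
        Matrix.PosDef ((2⁻¹ : ℂ) • (H + Hᴴ)) →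
        H * (Xᴴ * A * X)⁻¹ * H = Xᴴ * B * X → H = Xᴴ * G * X := by
  have hXd : IsUnit X.det := (Matrix.isUnit_iff_isUnit_det X).1 hX
  have hXHd : IsUnit Xᴴ.det := by rw [Matrix.det_conjTranspose]; exact hXd.star
  have hAu : IsUnit A := acc_isUnit hA
  have hAd : IsUnit A.det := (Matrix.isUnit_iff_isUnit_det A).1 hAu
  -- key congruence rewriting for the accretive part
  have congr_acc : ∀ Y M : Matrix (Fin n) (Fin n) ℂ,
      (2⁻¹ : ℂ) • ((Yᴴ * M * Y) + (Yᴴ * M * Y)ᴴ) = Yᴴ * ((2⁻¹ : ℂ) • (M + Mᴴ)) * Y := by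
    intro Y M
    simp only [Matrix.conjTranspose_mul, Matrix.conjTranspose_conjTranspose,
      Matrix.mul_smul, Matrix.smul_mul, Matrix.mul_add, Matrix.add_mul, Matrix.mul_assoc]
  -- inverse of the congruence
  have hinv : (Xᴴ * A * X)⁻¹ = X⁻¹ * A⁻¹ * (Xᴴ)⁻¹ := by
    rw [Matrix.mul_inv_rev, Matrix.mul_inv_rev, Matrix.mul_assoc]
  refine ⟨?_, ?_, ?_⟩
  · rw [congr_acc X G]; exact posdef_congr hG hX
  · rw [hinv]
    calc Xᴴ * G * X * (X⁻¹ * A⁻¹ * Xᴴ⁻¹) * (Xᴴ * G * X)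
        = Xᴴ * G * (X * X⁻¹) * A⁻¹ * (Xᴴ⁻¹ * Xᴴ) * G * X := by
          simp only [Matrix.mul_assoc]
      _ = Xᴴ * (G * A⁻¹ * G) * X := by
          rw [Matrix.mul_nonsing_inv _ hXd, Matrix.nonsing_inv_mul _ hXHd]
          simp only [Matrix.mul_one, Matrix.one_mul, Matrix.mul_assoc]
      _ = Xᴴ * B * X := by rw [hGsol]
  · intro H hHpd hHsol
    set G' : Matrix (Fin n) (Fin n) ℂ := (Xᴴ)⁻¹ * H * X⁻¹ with hG'
    have hXinv : IsUnit X⁻¹ := by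
      rw [Matrix.isUnit_iff_isUnit_det, Matrix.det_nonsing_inv, isUnit_ringInverse]
      exact hXd
    have hG'acc : Matrix.PosDef ((2⁻¹ : ℂ) • (G' + G'ᴴ)) := by
      have : G' = (X⁻¹)ᴴ * H * X⁻¹ := by rw [hG', Matrix.conjTranspose_nonsing_inv]
      rw [this, congr_acc X⁻¹ H]
      exact posdef_congr hHpd hXinv
    have hG'sol : G' * A⁻¹ * G' = B := by
      have key : Xᴴ * (G' * A⁻¹ * G') * X = Xᴴ * B * X := by
        calc Xᴴ * (G' * A⁻¹ * G') * X
            = (Xᴴ * Xᴴ⁻¹) * H * (X⁻¹ * A⁻¹ * Xᴴ⁻¹) * H * (X⁻¹ * X) := by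
              simp only [hG', Matrix.mul_assoc]
          _ = H * (Xᴴ * A * X)⁻¹ * H := by
              rw [Matrix.mul_nonsing_inv _ hXHd, Matrix.nonsing_inv_mul _ hXd, hinv]
              simp only [Matrix.mul_one, Matrix.one_mul, Matrix.mul_assoc]
          _ = Xᴴ * B * X := hHsol
      have e : ∀ P : Matrix (Fin n) (Fin n) ℂ, Xᴴ⁻¹ * (Xᴴ * P * X) * X⁻¹ = P := by
        intro P
        rw [Matrix.mul_assoc Xᴴ⁻¹, Matrix.mul_assoc (Xᴴ * P), Matrix.mul_nonsing_inv _ hXd,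
          Matrix.mul_one, ← Matrix.mul_assoc, Matrix.nonsing_inv_mul _ hXHd, Matrix.one_mul]
      have hcancel : ∀ M N : Matrix (Fin n) (Fin n) ℂ, Xᴴ * M * X = Xᴴ * N * X → M = N := by
        intro M N h
        rw [← e M, ← e N, h]
      exact hcancel _ _ key
    have := hGuniq G' hG'acc hG'sol
    have hH : H = Xᴴ * G' * X := by
      rw [hG']
      calc H = (Xᴴ * Xᴴ⁻¹) * H * (X⁻¹ * X) := by
              rw [Matrix.mul_nonsing_inv _ hXHd, Matrix.nonsing_inv_mul _ hXd]
              simp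
        _ = Xᴴ * (Xᴴ⁻¹ * H * X⁻¹) * X := by simp only [Matrix.mul_assoc]
    rw [hH, this]
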